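/- Let $\alpha_1,\dots,\alpha_{N+1}$ be exchangeable real-valued random variables and define $p = \frac{1}{N+1}\big(|\{i \le N+1 : \alpha_{N+1} > \alpha_i\}| + u\,|\{i \le N+1 : \alpha_{N+1} = \alpha_i\}|\big)$ where $u \sim \mathrm{Unif}(0,1)$ is independent of the $\alpha_i$. Then $p$ satisfies $P(p \le \epsilon) \le \epsilon$ for all $\epsilon \in [0,1]$. -/

import Mathlib

open MeasureTheory ProbabilityTheory
open scoped ENNReal

namespace SCP
variable {N : ℕ}

noncomputable def bcnt (a : Fin (N + 1) → ℝ) (j : Fin (N + 1)) : ℕ :=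
  (Finset.univ.filter (fun i => a j > a i)).card

noncomputable def ecnt (a : Fin (N + 1) → ℝ) (j : Fin (N + 1)) : ℕ :=
  (Finset.univ.filter (fun i => a j = a i)).card

lemma ecnt_pos (a : Fin (N + 1) → ℝ) (j : Fin (N + 1)) : 0 < ecnt a j := by
  apply Finset.card_pos.2
  exact ⟨j, by simp⟩

lemma be_card (a : Fin (N + 1) → ℝ) (j : Fin (N + 1)) :
    bcnt a j + ecnt a j = (Finset.univ.filter (fun i => a i ≤ a j)).card := by
  classical
  rw [bcnt, ecnt, ← Finset.card_union_of_disjoint, ← Finset.filter_or]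
  · congr 1
    apply Finset.filter_congr
    intro i _
    simp only [gt_iff_lt, le_iff_lt_or_eq, eq_comm]
  · rw [Finset.disjoint_filter]
    intro i _ h h'
    exact (ne_of_gt h) h'

lemma be_le (a : Fin (N + 1) → ℝ) (j : Fin (N + 1)) : bcnt a j + ecnt a j ≤ N + 1 := by
  classical
  rw [be_card]
  have := Finset.card_filter_le (Finset.univ : Finset (Fin (N + 1))) (fun i => a i ≤ a j)
  simpa using this

lemma be_mono (a : Fin (N + 1) → ℝ) {j j' : Fin (N + 1)} (h : a j < a j') :
    bcnt a j + ecnt a j ≤ bcnt a j' := by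
  rw [be_card, bcnt]
  apply Finset.card_le_card
  intro i hi
  simp only [Finset.mem_filter, Finset.mem_univ, true_and, gt_iff_lt] at *
  exact lt_of_le_of_lt hi h

lemma sum_min_one (n : ℕ) (x : ℝ) :
    ∑ k ∈ Finset.range n, min 1 (max 0 (x - k)) = min (n : ℝ) (max 0 x) := by
  induction n with
  | zero => simp
  | succ n ih =>
    rw [Finset.sum_range_succ, ih]
    push_cast
    rcases le_total x n with h | h
    · have h1 : max 0 (x - n) = 0 := max_eq_left (by linarith)
      have h2 : max 0 x ≤ (n : ℝ) := max_le (Nat.cast_nonneg n) h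
      have h3 : max 0 x ≤ (n : ℝ) + 1 := by linarith
      rw [h1, min_eq_right h2, min_eq_right zero_le_one, add_zero, min_eq_right h3]
    · have hn0 : (0:ℝ) ≤ n := Nat.cast_nonneg n
      have h1 : max 0 x = x := max_eq_right (by linarith)
      have h2 : max 0 (x - n) = x - n := max_eq_right (by linarith)
      rw [h1, h2, min_eq_left h]
      rcases le_total x (n + 1) with h3 | h3
      · have h4 : x - n ≤ 1 := by linarith
        rw [min_eq_right h4, min_eq_right h3]; ring
      · have h4 : (1:ℝ) ≤ x - n := by linarith
        rw [min_eq_left h4, min_eq_left h3]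

lemma cover_le_one (a : Fin (N + 1) → ℝ) (k : ℕ) :
    ∑ j ∈ Finset.univ.filter (fun j => bcnt a j ≤ k ∧ k < bcnt a j + ecnt a j),
      ((ecnt a j : ℝ))⁻¹ ≤ 1 := by
  classical
  set S := Finset.univ.filter (fun j => bcnt a j ≤ k ∧ k < bcnt a j + ecnt a j) with hS
  rcases S.eq_empty_or_nonempty with h | ⟨j₀, hj₀⟩
  · simp [h]
  have hj₀' := (Finset.mem_filter.1 hj₀).2
  have hval : ∀ j ∈ S, a j = a j₀ := by
    intro j hj
    have hj' := (Finset.mem_filter.1 hj).2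
    rcases lt_trichotomy (a j) (a j₀) with h | h | h
    · exact absurd (be_mono a h) (by omega)
    · exact h
    · exact absurd (be_mono a h) (by omega)
  have hecnt : ∀ j ∈ S, ecnt a j = ecnt a j₀ := by
    intro j hj
    unfold ecnt
    rw [hval j hj]
  have hsub : S ⊆ Finset.univ.filter (fun i => a j₀ = a i) := by
    intro j hj
    simp only [Finset.mem_filter, Finset.mem_univ, true_and]
    exact (hval j hj).symm
  have hcard : S.card ≤ ecnt a j₀ := Finset.card_le_card hsub
  calc ∑ j ∈ S, ((ecnt a j : ℝ))⁻¹ = ∑ _j ∈ S, ((ecnt a j₀ : ℝ))⁻¹ := by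
        apply Finset.sum_congr rfl; intro j hj; rw [hecnt j hj]
    _ = S.card * ((ecnt a j₀ : ℝ))⁻¹ := by rw [Finset.sum_const, nsmul_eq_mul]
    _ ≤ ecnt a j₀ * ((ecnt a j₀ : ℝ))⁻¹ := by
        apply mul_le_mul_of_nonneg_right _ (by positivity)
        exact_mod_cast hcard
    _ = 1 := mul_inv_cancel₀ (by exact_mod_cast (ecnt_pos a j₀).ne')

lemma key_ineq (a : Fin (N + 1) → ℝ) (M : ℝ) (hM : 0 ≤ M) :
    ∑ j : Fin (N + 1), min 1 (max 0 ((M - bcnt a j) / ecnt a j)) ≤ M := by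
  classical
  have hterm : ∀ j : Fin (N + 1),
      min 1 (max 0 ((M - bcnt a j) / ecnt a j))
        = ((ecnt a j : ℝ))⁻¹ * ∑ r ∈ Finset.range (ecnt a j),
            min 1 (max 0 ((M - bcnt a j) - r)) := by
    intro j
    have he : (0:ℝ) < ecnt a j := by exact_mod_cast ecnt_pos a j
    rw [sum_min_one (ecnt a j) (M - bcnt a j)]
    rw [inv_mul_eq_div, ← min_div_div_right he.le, div_self he.ne',
      ← max_div_div_right he.le, zero_div]
  -- rewrite each inner sum as a sum over `range (N+1)` with indicator
  have hterm2 : ∀ j : Fin (N + 1),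
      ∑ r ∈ Finset.range (ecnt a j), min 1 (max 0 ((M - bcnt a j) - r))
        = ∑ k ∈ Finset.range (N + 1),
            (if bcnt a j ≤ k ∧ k < bcnt a j + ecnt a j then min 1 (max 0 (M - k)) else 0) := by
    intro j
    have h1 : ∑ r ∈ Finset.range (ecnt a j), min 1 (max 0 ((M - bcnt a j) - r))
        = ∑ k ∈ Finset.Ico (bcnt a j) (bcnt a j + ecnt a j), min 1 (max 0 (M - k)) := by
      rw [Finset.sum_Ico_eq_sum_range]
      simp only [add_tsub_cancel_left]
      apply Finset.sum_congr rfl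
      intro r _
      congr 1
      push_cast
      ring_nf
    have hbe := be_le a j
    have hset : Finset.Ico (bcnt a j) (bcnt a j + ecnt a j)
        = (Finset.range (N + 1)).filter
            (fun k => bcnt a j ≤ k ∧ k < bcnt a j + ecnt a j) := by
      ext k
      simp only [Finset.mem_Ico, Finset.mem_filter, Finset.mem_range]
      omega
    rw [h1, hset, Finset.sum_filter]
  calc ∑ j : Fin (N + 1), min 1 (max 0 ((M - bcnt a j) / ecnt a j))
      = ∑ j : Fin (N + 1), ∑ k ∈ Finset.range (N + 1),
          ((ecnt a j : ℝ))⁻¹ *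
          (if bcnt a j ≤ k ∧ k < bcnt a j + ecnt a j then min 1 (max 0 (M - k)) else 0) := by
        apply Finset.sum_congr rfl
        intro j _
        rw [hterm j, hterm2 j, Finset.mul_sum]
    _ = ∑ k ∈ Finset.range (N + 1), ∑ j : Fin (N + 1),
          ((ecnt a j : ℝ))⁻¹ *
          (if bcnt a j ≤ k ∧ k < bcnt a j + ecnt a j then min 1 (max 0 (M - k)) else 0) :=
        Finset.sum_comm
    _ ≤ ∑ k ∈ Finset.range (N + 1), min 1 (max 0 (M - k)) := by
        apply Finset.sum_le_sum
        intro k _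
        have hk : (0:ℝ) ≤ min 1 (max 0 (M - k)) := le_min zero_le_one (le_max_left _ _)
        calc ∑ j : Fin (N + 1), ((ecnt a j : ℝ))⁻¹ *
              (if bcnt a j ≤ k ∧ k < bcnt a j + ecnt a j then min 1 (max 0 (M - k)) else 0)
            = (∑ j ∈ Finset.univ.filter
                (fun j => bcnt a j ≤ k ∧ k < bcnt a j + ecnt a j),
                ((ecnt a j : ℝ))⁻¹) * min 1 (max 0 (M - k)) := by
              rw [Finset.sum_filter, Finset.sum_mul]
              apply Finset.sum_congr rfl
              intro j _
              by_cases h : bcnt a j ≤ k ∧ k < bcnt a j + ecnt a j <;> simp [h]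
          _ ≤ 1 * min 1 (max 0 (M - k)) :=
              mul_le_mul_of_nonneg_right (cover_le_one a k) hk
          _ = min 1 (max 0 (M - k)) := one_mul _
    _ = min ((N:ℝ) + 1) (max 0 M) := by
        have := sum_min_one (N + 1) M
        push_cast at this ⊢
        exact this
    _ ≤ M := by
        rw [max_eq_right hM]
        exact min_le_right _ _

lemma bcnt_comp (a : Fin (N + 1) → ℝ) (π : Equiv.Perm (Fin (N + 1))) (j : Fin (N + 1)) :
    bcnt (fun i => a (π i)) j = bcnt a (π j) := by
  unfold bcnt
  apply Finset.card_equiv π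
  intro i
  simp

lemma ecnt_comp (a : Fin (N + 1) → ℝ) (π : Equiv.Perm (Fin (N + 1))) (j : Fin (N + 1)) :
    ecnt (fun i => a (π i)) j = ecnt a (π j) := by
  unfold ecnt
  apply Finset.card_equiv π
  intro i
  simp

lemma meas_bcnt (j : Fin (N + 1)) :
    Measurable (fun a : Fin (N + 1) → ℝ => (bcnt a j : ℝ)) := by
  classical
  have h : (fun a : Fin (N + 1) → ℝ => (bcnt a j : ℝ))
      = fun a => ∑ i : Fin (N + 1), if a i < a j then (1 : ℝ) else 0 := by
    funext a
    rw [bcnt, Finset.card_filter]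
    push_cast
    rfl
  rw [h]
  exact Finset.measurable_sum _ fun i _ =>
    Measurable.ite (measurableSet_lt (measurable_pi_apply i) (measurable_pi_apply j))
      measurable_const measurable_const

lemma meas_ecnt (j : Fin (N + 1)) :
    Measurable (fun a : Fin (N + 1) → ℝ => (ecnt a j : ℝ)) := by
  classical
  have h : (fun a : Fin (N + 1) → ℝ => (ecnt a j : ℝ))
      = fun a => ∑ i : Fin (N + 1), if a j = a i then (1 : ℝ) else 0 := by
    funext a
    rw [ecnt, Finset.card_filter]
    push_cast
    rfl
  rw [h]
  exact Finset.measurable_sum _ fun i _ =>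
    Measurable.ite (measurableSet_eq_fun (measurable_pi_apply j) (measurable_pi_apply i))
      measurable_const measurable_const

lemma slice_eq (b e : ℕ) (he : 0 < e) (M : ℝ) :
    (volume.restrict (Set.Icc (0:ℝ) 1)) {t : ℝ | (b:ℝ) + t * e ≤ M}
      = ENNReal.ofReal (min 1 (max 0 ((M - b) / e))) := by
  have he' : (0:ℝ) < e := by exact_mod_cast he
  have hset : {t : ℝ | (b:ℝ) + t * e ≤ M} = Set.Iic ((M - b) / e) := by
    ext t
    simp only [Set.mem_setOf_eq, Set.mem_Iic]
    rw [le_div_iff₀ he']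
    constructor <;> intro <;> linarith
  rw [hset, Measure.restrict_apply measurableSet_Iic]
  have hint : Set.Iic ((M - b) / e) ∩ Set.Icc (0:ℝ) 1
      = Set.Icc 0 (min ((M - b) / e) 1) := by
    ext t
    simp only [Set.mem_inter_iff, Set.mem_Iic, Set.mem_Icc, le_min_iff]
    tauto
  rw [hint, Real.volume_Icc]
  rcases le_total ((M - b) / e) 0 with h | h
  · rw [min_eq_left (h.trans zero_le_one), max_eq_left h]
    simp [ENNReal.ofReal_of_nonpos, h]
  · rw [max_eq_right h, sub_zero, min_comm]

end SCP


open SCP in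

/-- the smoothed conformal p-value built from `N + 1`
exchangeable scores and an independent Uniform(0,1) tie-breaker is valid:
`P(p ≤ ε) ≤ ε` for all `ε ∈ [0,1]`. -/
theorem smoothed_conformal_p_value_valid
    {Ω : Type*} [MeasurableSpace Ω]
    (P : Measure Ω) [IsProbabilityMeasure P] {N : ℕ}
    (α : Fin (N + 1) → Ω → ℝ) (hαmeas : ∀ i, Measurable (α i))
    (hexch : ∀ π : Equiv.Perm (Fin (N + 1)),
      Measure.map (fun ω => fun i => α (π i) ω) P
        = Measure.map (fun ω => fun i => α i ω) P)
    (u : Ω → ℝ) (humeas : Measurable u)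
    (hulaw : Measure.map u P = Measure.restrict volume (Set.Icc (0 : ℝ) 1))
    (huindep : IndepFun u (fun ω => fun i => α i ω) P)
    (p : Ω → ℝ)
    (hp : ∀ ω, p ω =
      (((Finset.univ.filter
          (fun i => α (Fin.last N) ω > α i ω)).card : ℝ)
        + u ω * ((Finset.univ.filter
          (fun i => α (Fin.last N) ω = α i ω)).card : ℝ)) / (N + 1)) :
    ∀ ε : ℝ, 0 ≤ ε → ε ≤ 1 → P {ω | p ω ≤ ε} ≤ ENNReal.ofReal ε := by
  intro ε hε0 hε1
  classical
  set M : ℝ := ((N : ℝ) + 1) * ε with hMdef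
  have hM : 0 ≤ M := by positivity
  set A : Ω → (Fin (N + 1) → ℝ) := fun ω i => α i ω with hAdef
  have hAmeas : Measurable A := measurable_pi_lambda _ hαmeas
  set ν : Measure (Fin (N + 1) → ℝ) := Measure.map A P with hν
  have hνprob : IsProbabilityMeasure ν := Measure.isProbabilityMeasure_map hAmeas.aemeasurable
  set unif : Measure ℝ := Measure.restrict volume (Set.Icc (0:ℝ) 1) with hunif
  have hunifprob : IsProbabilityMeasure unif := by
    constructor
    rw [hunif, Measure.restrict_apply_univ, Real.volume_Icc]
    norm_num
  have hjoint : Measure.map (fun ω => (A ω, u ω)) P = ν.prod unif := by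
    rw [hν, ← hulaw]
    exact (indepFun_iff_map_prod_eq_prod_map_map hAmeas.aemeasurable
      humeas.aemeasurable).mp huindep.symm
  set G : Fin (N + 1) → Set ((Fin (N + 1) → ℝ) × ℝ) :=
    fun j => {q | ((bcnt q.1 j : ℝ) + q.2 * (ecnt q.1 j : ℝ)) / ((N : ℝ) + 1) ≤ ε} with hG
  have hGmeas : ∀ j, MeasurableSet (G j) := by
    intro j
    have h1 : Measurable fun q : (Fin (N + 1) → ℝ) × ℝ =>
        ((bcnt q.1 j : ℝ) + q.2 * (ecnt q.1 j : ℝ)) / ((N : ℝ) + 1) :=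
      (((meas_bcnt j).comp measurable_fst).add
        (measurable_snd.mul ((meas_ecnt j).comp measurable_fst))).div_const _
    exact h1 measurableSet_Iic
  have hset0 : {ω | p ω ≤ ε} = (fun ω => (A ω, u ω)) ⁻¹' (G (Fin.last N)) := by
    ext ω
    simp only [Set.mem_setOf_eq, Set.mem_preimage, hG, hp ω, bcnt, ecnt, hAdef]
  have hPmap : P ((fun ω => (A ω, u ω)) ⁻¹' (G (Fin.last N)))
      = (ν.prod unif) (G (Fin.last N)) := by
    rw [← hjoint, Measure.map_apply (hAmeas.prodMk humeas) (hGmeas _)]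
  have hswap : ∀ j, (ν.prod unif) (G j) = (ν.prod unif) (G (Fin.last N)) := by
    intro j
    set π := Equiv.swap j (Fin.last N) with hπ
    set T : (Fin (N + 1) → ℝ) → (Fin (N + 1) → ℝ) := fun a i => a (π i) with hT
    have hTmeas : Measurable T := measurable_pi_lambda _ fun i => measurable_pi_apply (π i)
    have hνT : Measure.map T ν = ν := by
      rw [hν, Measure.map_map hTmeas hAmeas]
      exact hexch π
    have hpre : (Prod.map T id) ⁻¹' (G (Fin.last N)) = G j := by
      ext q
      simp only [Set.mem_preimage, Prod.map, hG, Set.mem_setOf_eq, id]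
      rw [show bcnt (T q.1) (Fin.last N) = bcnt q.1 j from by
            rw [hT, bcnt_comp q.1 π (Fin.last N), hπ, Equiv.swap_apply_right],
          show ecnt (T q.1) (Fin.last N) = ecnt q.1 j from by
            rw [hT, ecnt_comp q.1 π (Fin.last N), hπ, Equiv.swap_apply_right]]
    have hmapprod : Measure.map (Prod.map T id) (ν.prod unif) = ν.prod unif := by
      rw [← Measure.map_prod_map ν unif hTmeas measurable_id, hνT, Measure.map_id]
    calc (ν.prod unif) (G j)
        = (ν.prod unif) ((Prod.map T id) ⁻¹' (G (Fin.last N))) := by rw [hpre]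
      _ = (Measure.map (Prod.map T id) (ν.prod unif)) (G (Fin.last N)) :=
          (Measure.map_apply (hTmeas.prodMap measurable_id) (hGmeas _)).symm
      _ = (ν.prod unif) (G (Fin.last N)) := by rw [hmapprod]
  have hslice : ∀ (j : Fin (N + 1)) (a : Fin (N + 1) → ℝ),
      unif (Prod.mk a ⁻¹' (G j))
        = ENNReal.ofReal (min 1 (max 0 ((M - bcnt a j) / ecnt a j))) := by
    intro j a
    have hNpos : (0:ℝ) < (N : ℝ) + 1 := by positivity
    have hseteq : Prod.mk a ⁻¹' (G j)
        = {t : ℝ | (bcnt a j : ℝ) + t * ecnt a j ≤ M} := by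
      ext t
      simp only [Set.mem_preimage, hG, Set.mem_setOf_eq]
      rw [div_le_iff₀ hNpos, hMdef]
      constructor <;> intro <;> nlinarith
    rw [hunif, hseteq, slice_eq _ _ (ecnt_pos a j) M]
  have hbound : ∀ a : Fin (N + 1) → ℝ,
      ∑ j : Fin (N + 1), unif (Prod.mk a ⁻¹' (G j)) ≤ ENNReal.ofReal M := by
    intro a
    calc ∑ j : Fin (N + 1), unif (Prod.mk a ⁻¹' (G j))
        = ∑ j : Fin (N + 1),
            ENNReal.ofReal (min 1 (max 0 ((M - bcnt a j) / ecnt a j))) :=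
          Finset.sum_congr rfl fun j _ => hslice j a
      _ = ENNReal.ofReal (∑ j : Fin (N + 1),
            min 1 (max 0 ((M - bcnt a j) / ecnt a j))) :=
          (ENNReal.ofReal_sum_of_nonneg fun j _ =>
            le_min zero_le_one (le_max_left _ _)).symm
      _ ≤ ENNReal.ofReal M := ENNReal.ofReal_le_ofReal (key_ineq a M hM)
  have hKey : ((N : ℝ≥0∞) + 1) * (ν.prod unif) (G (Fin.last N)) ≤ ENNReal.ofReal M := by
    have h1 : ∑ j : Fin (N + 1), (ν.prod unif) (G j)
        = ((N : ℝ≥0∞) + 1) * (ν.prod unif) (G (Fin.last N)) := by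
      rw [Finset.sum_congr rfl fun j _ => hswap j, Finset.sum_const, Finset.card_univ,
        Fintype.card_fin, nsmul_eq_mul]
      push_cast
      ring
    rw [← h1]
    calc ∑ j : Fin (N + 1), (ν.prod unif) (G j)
        = ∑ j : Fin (N + 1), ∫⁻ a, unif (Prod.mk a ⁻¹' (G j)) ∂ν :=
          Finset.sum_congr rfl fun j _ => Measure.prod_apply (hGmeas j)
      _ = ∫⁻ a, ∑ j : Fin (N + 1), unif (Prod.mk a ⁻¹' (G j)) ∂ν :=
          (lintegral_finset_sum _ fun j _ =>
            measurable_measure_prodMk_left (hGmeas j)).symm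
      _ ≤ ∫⁻ x, (fun _ => ENNReal.ofReal M) x ∂ν := lintegral_mono hbound
      _ = ENNReal.ofReal M := by rw [lintegral_const, measure_univ, mul_one]
  rw [hset0, hPmap]
  have hMeq : ENNReal.ofReal M = ((N : ℝ≥0∞) + 1) * ENNReal.ofReal ε := by
    rw [hMdef, ENNReal.ofReal_mul (by positivity)]
    congr 1
    rw [show ((N : ℝ) + 1) = ((N + 1 : ℕ) : ℝ) by push_cast; ring,
      ENNReal.ofReal_natCast]
    push_cast
    ring
  rw [hMeq] at hKey
  exact (ENNReal.mul_le_mul_iff_right (by simp) (by simp)).mp hKey
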